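/- Let X be a real symmetric n×n matrix. Then Tr(Q X) ≥ 0 for every symmetric diagonally dominant n×n matrix Q if and only if vᵀ X v ≥ 0 for every v ∈ V_n. (This is the description of the dual cone DD*_n of the cone of diagonally dominant matrices.) -/

import Mathlib

open scoped Matrix

/-- A real matrix is diagonally dominant if `A i i ≥ ∑_{j ≠ i} |A i j|` for every `i`. -/
def IsDiagDom {n : ℕ} (A : Matrix (Fin n) (Fin n) ℝ) : Prop :=
  ∀ i, ∑ j ∈ Finset.univ.filter (fun j => j ≠ i), |A i j| ≤ A i i

/-- `v` belongs to `V_n`: `v` is a nonzero vector in `ℝⁿ` with at most 2 nonzero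
components, each equal to `+1` or `-1`. -/
def MemVn {n : ℕ} (v : Fin n → ℝ) : Prop :=
  v ≠ 0 ∧ (∀ i, v i = 0 ∨ v i = 1 ∨ v i = -1) ∧
    ∃ i j : Fin n, ∀ k, k ≠ i → k ≠ j → v k = 0

private lemma sign_mul_abs' (x : ℝ) : Real.sign x * |x| = x := by
  rcases lt_trichotomy x 0 with h|h|h
  · rw [Real.sign_of_neg h, abs_of_neg h]; ring
  · simp [h]
  · rw [Real.sign_of_pos h, abs_of_pos h]; ring

private lemma sum_ite_pair {n : ℕ} {i j : Fin n} (hij : i ≠ j) (s : ℝ) (g : Fin n → ℝ) :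
    ∑ k, g k * (if k = i then 1 else if k = j then s else 0) = g i + g j * s := by
  have h : ∀ k, g k * (if k = i then 1 else if k = j then s else 0)
      = (if k = i then g k else 0) + (if k = j then g k * s else 0) := by
    intro k
    by_cases h1 : k = i
    · subst h1; simp [hij]
    · by_cases h2 : k = j
      · subst h2; simp [h1, Ne.symm hij]
      · simp [h1, h2]
  simp_rw [h, Finset.sum_add_distrib, Finset.sum_ite_eq' Finset.univ, Finset.mem_univ, if_true]

private lemma quad_single {n : ℕ} (X : Matrix (Fin n) (Fin n) ℝ) (i : Fin n) :
    dotProduct (fun k => if k = i then (1:ℝ) else 0)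
      (X.mulVec (fun k => if k = i then (1:ℝ) else 0)) = X i i := by
  simp [dotProduct, Matrix.mulVec, mul_ite, Finset.sum_ite_eq', ite_mul]

private lemma quad_pair {n : ℕ} (X : Matrix (Fin n) (Fin n) ℝ) {i j : Fin n} (hij : i ≠ j)
    (s : ℝ) :
    dotProduct (fun k => if k = i then (1:ℝ) else if k = j then s else 0)
      (X.mulVec (fun k => if k = i then (1:ℝ) else if k = j then s else 0))
      = X i i + s * X i j + s * X j i + s * s * X j j := by
  have hmv : ∀ k, X.mulVec (fun k => if k = i then (1:ℝ) else if k = j then s else 0) k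
      = X k i + X k j * s := by
    intro k
    simpa [Matrix.mulVec, dotProduct] using sum_ite_pair hij s (fun m => X k m)
  have : dotProduct (fun k => if k = i then (1:ℝ) else if k = j then s else 0)
      (X.mulVec (fun k => if k = i then (1:ℝ) else if k = j then s else 0))
      = ∑ k, (X.mulVec (fun k => if k = i then (1:ℝ) else if k = j then s else 0)) k
          * (if k = i then (1:ℝ) else if k = j then s else 0) := by
    simp [dotProduct, mul_comm]
  rw [this, sum_ite_pair hij s, hmv, hmv]
  ring

/-- The dual cone of the diagonally dominant cone: for a real symmetric matrix `X`,
`Tr(Q X) ≥ 0` for every symmetric diagonally dominant `Q` if and only if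
`vᵀ X v ≥ 0` for every `v ∈ V_n`. -/
theorem mem_dual_dd_iff {n : ℕ} (X : Matrix (Fin n) (Fin n) ℝ) (hX : X.IsSymm) :
    (∀ Q : Matrix (Fin n) (Fin n) ℝ, Q.IsSymm → IsDiagDom Q → 0 ≤ (Q * X).trace) ↔
      (∀ v : Fin n → ℝ, MemVn v → 0 ≤ dotProduct v (X.mulVec v)) := by
  have hXs : ∀ a b, X b a = X a b := fun a b => hX.apply a b
  constructor
  · -- forward: use Q = v vᵀ
    intro h v hv
    obtain ⟨hv0, hv1, i0, j0, hv2⟩ := hv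
    set Q : Matrix (Fin n) (Fin n) ℝ := Matrix.of (fun a b => v a * v b) with hQdef
    have habs : ∀ k, |v k| ≤ 1 := by
      intro k; rcases hv1 k with h'|h'|h' <;> simp [h']
    have hQsymm : Q.IsSymm := by
      ext a b; simp [hQdef, Matrix.transpose_apply, mul_comm]
    have hQdd : IsDiagDom Q := by
      intro i
      rcases hv1 i with h'|h'|h'
      · simp [hQdef, h', abs_mul]
      all_goals {
        have hvi2 : v i * v i = 1 := by rw [h']; ring
        have habsi : |v i| = 1 := by rw [h']; simp
        have hi : i = i0 ∨ i = j0 := by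
          by_contra hc
          push_neg at hc
          rw [hv2 i hc.1 hc.2] at h'
          norm_num at h'
        -- m is the "other" witness
        obtain ⟨m, hm⟩ : ∃ m, ∀ k, k ≠ i → k ≠ m → v k = 0 := by
          rcases hi with rfl|rfl
          · exact ⟨j0, hv2⟩
          · exact ⟨i0, fun k h1 h2 => hv2 k h2 h1⟩
        show ∑ j ∈ Finset.univ.filter (fun j => j ≠ i), |Q i j| ≤ Q i i
        have hQii : Q i i = 1 := hvi2
        rw [hQii]
        by_cases hmi : m = i
        · have : ∀ j ∈ Finset.univ.filter (fun j => j ≠ i), |Q i j| = 0 := by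
            intro j hj
            simp only [Finset.mem_filter] at hj
            have : v j = 0 := hm j hj.2 (hmi ▸ hj.2)
            simp [hQdef, this, abs_mul]
          rw [Finset.sum_eq_zero this]; norm_num
        · have hsum : ∑ j ∈ Finset.univ.filter (fun j => j ≠ i), |Q i j| = |Q i m| := by
            apply Finset.sum_eq_single
            · intro b hb hbm
              simp only [Finset.mem_filter] at hb
              have : v b = 0 := hm b hb.2 hbm
              simp [hQdef, this, abs_mul]
            · intro hm'
              simp [hmi] at hm'
          rw [hsum]
          have : |Q i m| = |v i| * |v m| := by simp [hQdef, abs_mul]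
          rw [this, habsi, one_mul]
          exact habs m }
    have htr : (Q * X).trace = dotProduct v (X.mulVec v) := by
      simp only [Matrix.trace, Matrix.diag, Matrix.mul_apply, dotProduct,
        Matrix.mulVec, Finset.mul_sum, hQdef, Matrix.of_apply]
      apply Finset.sum_congr rfl
      intro a _
      apply Finset.sum_congr rfl
      intro b _
      rw [hXs a b]
      ring
    have := h Q hQsymm hQdd
    rwa [htr] at this
  · -- reverse
    intro h Q hQsymm hQdd
    have hQs : ∀ a b, Q b a = Q a b := fun a b => hQsymm.apply a b
    have hdiag : ∀ i, 0 ≤ X i i := by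
      intro i
      have hmem : MemVn (fun k => if k = i then (1:ℝ) else 0) := by
        refine ⟨?_, ?_, i, i, ?_⟩
        · intro hc
          have := congrFun hc i
          simp at this
        · intro k; by_cases hk : k = i <;> simp [hk]
        · intro k hk _; simp [hk]
      have := h _ hmem
      rwa [quad_single] at this
    have hpair : ∀ i j, i ≠ j → 0 ≤ |Q i j| * (X i i + X j j + 2 * Real.sign (Q i j) * X i j) := by
      intro i j hij
      by_cases hq : Q i j = 0
      · simp [hq]
      apply mul_nonneg (abs_nonneg _)
      set s := Real.sign (Q i j) with hs
      have hs2 : s = 1 ∨ s = -1 := (Real.sign_apply_eq_of_ne_zero _ hq).symm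
      have hss : s * s = 1 := by rcases hs2 with h'|h' <;> rw [h'] <;> ring
      have hmem : MemVn (fun k => if k = i then (1:ℝ) else if k = j then s else 0) := by
        refine ⟨?_, ?_, i, j, ?_⟩
        · intro hc
          have := congrFun hc i
          simp at this
        · intro k
          by_cases h1 : k = i
          · simp [h1]
          by_cases h2 : k = j
          · subst h2
            simp only [if_neg h1, if_pos rfl]
            rcases hs2 with h'|h' <;> simp [h']
          · simp [h1, h2]
        · intro k h1 h2; simp [h1, h2]
      have := h _ hmem
      rw [quad_pair X hij s] at this
      calc (0:ℝ) ≤ X i i + s * X i j + s * X j i + s * s * X j j := this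
        _ = X i i + X j j + 2 * s * X i j := by rw [hXs i j, hss]; ring
    -- the key identity
    set R : Fin n → ℝ := fun i => ∑ j ∈ Finset.univ.filter (fun j => j ≠ i), |Q i j| with hR
    set T : Fin n → Fin n → ℝ :=
      fun i j => X i i + X j j + 2 * Real.sign (Q i j) * X i j with hT
    have key : (Q * X).trace
        = ∑ i, (Q i i - R i) * X i i
          + (1/2) * ∑ i, ∑ j ∈ Finset.univ.filter (fun j => j ≠ i), |Q i j| * T i j := by
      have htr : (Q * X).trace = ∑ i, ∑ j, Q i j * X i j := by
        simp only [Matrix.trace, Matrix.diag, Matrix.mul_apply]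
        exact Finset.sum_congr rfl fun a _ => Finset.sum_congr rfl fun b _ => by rw [hXs a b]
      -- split off diagonal
      have hsplit : ∀ i, ∑ j, Q i j * X i j
          = Q i i * X i i + ∑ j ∈ Finset.univ.filter (fun j => j ≠ i), Q i j * X i j := by
        intro i
        rw [Finset.filter_ne' Finset.univ i,
          ← Finset.add_sum_erase Finset.univ _ (Finset.mem_univ i)]
      -- expand T
      have hTexp : ∀ i, ∑ j ∈ Finset.univ.filter (fun j => j ≠ i), |Q i j| * T i j
          = ∑ j ∈ Finset.univ.filter (fun j => j ≠ i),
              (|Q i j| * X i i + |Q i j| * X j j + 2 * (Q i j * X i j)) := by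
        intro i
        apply Finset.sum_congr rfl
        intro j _
        have : |Q i j| * (2 * Real.sign (Q i j) * X i j) = 2 * (Q i j * X i j) := by
          rw [show |Q i j| * (2 * Real.sign (Q i j) * X i j)
              = 2 * ((Real.sign (Q i j) * |Q i j|) * X i j) by ring, sign_mul_abs' (Q i j)]
        simp only [hT]
        rw [mul_add, mul_add, this]
      -- the swap lemma: ∑_{i, j≠i} |Q i j| X j j = ∑_{i, j≠i} |Q i j| X i i
      have hswap : ∑ i, ∑ j ∈ Finset.univ.filter (fun j => j ≠ i), |Q i j| * X j j
          = ∑ i, ∑ j ∈ Finset.univ.filter (fun j => j ≠ i), |Q i j| * X i i := by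
        simp_rw [Finset.sum_filter]
        rw [Finset.sum_comm]
        apply Finset.sum_congr rfl
        intro a _
        apply Finset.sum_congr rfl
        intro b _
        by_cases hab : a = b
        · simp [hab]
        · rw [if_pos (Ne.symm hab), if_pos hab, hQs a b]
      have e2 : ∀ i, ∑ j ∈ Finset.univ.filter (fun j => j ≠ i), |Q i j| * T i j
          = (∑ j ∈ Finset.univ.filter (fun j => j ≠ i), |Q i j| * X i i)
            + (∑ j ∈ Finset.univ.filter (fun j => j ≠ i), |Q i j| * X j j)
            + 2 * ∑ j ∈ Finset.univ.filter (fun j => j ≠ i), Q i j * X i j := by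
        intro i
        rw [hTexp i, Finset.sum_add_distrib, Finset.sum_add_distrib, ← Finset.mul_sum]
      have e3 : ∀ i, (Q i i - R i) * X i i
          = Q i i * X i i - ∑ j ∈ Finset.univ.filter (fun j => j ≠ i), |Q i j| * X i i := by
        intro i
        rw [sub_mul, hR, Finset.sum_mul]
      rw [htr, Finset.sum_congr rfl (fun i _ => hsplit i), Finset.sum_add_distrib,
        Finset.sum_congr rfl (fun i _ => e3 i), Finset.sum_sub_distrib,
        Finset.sum_congr rfl (fun i _ => e2 i), Finset.sum_add_distrib,
        Finset.sum_add_distrib, ← Finset.mul_sum, hswap]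
      ring
    rw [key]
    apply add_nonneg
    · apply Finset.sum_nonneg
      intro i _
      exact mul_nonneg (sub_nonneg.mpr (hQdd i)) (hdiag i)
    · apply mul_nonneg (by norm_num)
      apply Finset.sum_nonneg
      intro i _
      apply Finset.sum_nonneg
      intro j hj
      simp only [Finset.mem_filter] at hj
      exact hpair i j (Ne.symm hj.2)
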